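/- Let A be the Fell C*-algebra of a continuous Hilbert bundle over a locally compact Hausdorff space T. There exists a *-monomorphism β: A → K(Ω^Δ) (namely β = π_A ∘ δ_A) such that the composition γ ∘ β: A → Mloc(A), where γ: K(Ω^Δ) → Mloc(A) is the monomorphism compatible with the embeddings γ_I: A^I → M(I), is the canonical embedding of A into its local multiplier algebra (the composition of the canonical embedding A → M(A) with the canonical map M(A) → Mloc(A)). -/

import Mathlib

/- Common definitions: continuous Hilbert bundles and Fell (spatial continuous
trace) C*-algebras, following Fell (1961). -/

noncomputable section

/-- A vector field `ξ` is a local uniform limit of members of `S`. -/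
def LocUnifApprox {T : Type*} [TopologicalSpace T] {H : T → Type*}
    [∀ t, NormedAddCommGroup (H t)] (S : Set (∀ t, H t)) (ξ : ∀ t, H t) : Prop :=
  ∀ (t₀ : T) (ε : ℝ), 0 < ε → ∃ U : Set T, IsOpen U ∧ t₀ ∈ U ∧
    ∃ ω ∈ S, ∀ t ∈ U, ‖ω t - ξ t‖ < ε

/-- Axioms (I)-(IV) of a continuous Hilbert bundle `(T, {H t}, Ω)`. -/
structure IsCtsHilbertBundle {T : Type*} [TopologicalSpace T] {H : T → Type*}
    [∀ t, NormedAddCommGroup (H t)] [∀ t, InnerProductSpace ℂ (H t)]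
    (Ω : Set (∀ t, H t)) : Prop where
  /-- axiom (I): `Ω` is a `C(T)`-module (additive part) -/
  zero_mem : (fun t => (0 : H t)) ∈ Ω
  add_mem : ∀ ω ∈ Ω, ∀ ν ∈ Ω, (fun t => ω t + ν t) ∈ Ω
  /-- axiom (I): `C(T)`-action -/
  smul_mem : ∀ (f : C(T, ℂ)), ∀ ω ∈ Ω, (fun t => f t • ω t) ∈ Ω
  /-- axiom (II) -/
  full : ∀ (t : T) (v : H t), ∃ ω ∈ Ω, ω t = v
  /-- axiom (III) -/
  norm_continuous : ∀ ω ∈ Ω, Continuous fun t => ‖ω t‖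
  /-- axiom (IV) -/
  closed_locUnif : ∀ ξ : ∀ t, H t, LocUnifApprox Ω ξ → ξ ∈ Ω

variable {T : Type*} [TopologicalSpace T] {H : T → Type*}
  [∀ t, NormedAddCommGroup (H t)] [∀ t, InnerProductSpace ℂ (H t)]
  [∀ t, CompleteSpace (H t)]

/-- An operator field is weakly continuous w.r.t. the bundle `Ω`. -/
def WeaklyCts (Ω : Set (∀ t, H t)) (a : ∀ t, H t →L[ℂ] H t) : Prop :=
  ∀ ω₁ ∈ Ω, ∀ ω₂ ∈ Ω, Continuous fun t => (inner ℂ (a t (ω₁ t)) (ω₂ t) : ℂ)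

/-- An operator field is almost finite-dimensional w.r.t. the bundle `Ω`. -/
def AlmostFinDim (Ω : Set (∀ t, H t)) (a : ∀ t, H t →L[ℂ] H t) : Prop :=
  ∀ (t₀ : T) (ε : ℝ), 0 < ε → ∃ U : Set T, IsOpen U ∧ t₀ ∈ U ∧
    ∃ (n : ℕ) (ω : Fin n → ∀ t, H t), (∀ i, ω i ∈ Ω) ∧ ∀ t ∈ U,
      LinearIndependent ℂ (fun i => ω i t) ∧
      ∃ p : H t →L[ℂ] H t, IsIdempotentElem p ∧ IsSelfAdjoint p ∧
        LinearMap.range (p : H t →ₗ[ℂ] H t) = Submodule.span ℂ (Set.range fun i => ω i t) ∧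
        ‖p * a t * p - a t‖ < ε

/-- The Fell (spatial continuous-trace) C*-algebra `A(T, {H t}, Ω)`: all weakly
continuous, almost finite-dimensional operator fields whose pointwise norm
function lies in `C₀(T)`; a set of operator fields with pointwise operations. -/
def FellAlgebra (Ω : Set (∀ t, H t)) : Set (∀ t, H t →L[ℂ] H t) :=
  {a | WeaklyCts Ω a ∧ AlmostFinDim Ω a ∧ (Continuous fun t => ‖a t‖) ∧
    Filter.Tendsto (fun t => ‖a t‖) (Filter.cocompact T) (nhds 0)}

/-- `I` is a (closed, two-sided, star) ideal of the C*-algebra of operator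
fields `A` (with pointwise operations and supremum norm). -/
structure IsIdealOf (A I : Set (∀ t, H t →L[ℂ] H t)) : Prop where
  subset : I ⊆ A
  zero_mem : (0 : ∀ t, H t →L[ℂ] H t) ∈ I
  add_mem : ∀ a ∈ I, ∀ b ∈ I, a + b ∈ I
  smul_mem : ∀ (c : ℂ), ∀ a ∈ I, c • a ∈ I
  star_mem : ∀ a ∈ I, star a ∈ I
  mul_mem_left : ∀ a ∈ A, ∀ b ∈ I, a * b ∈ I
  mul_mem_right : ∀ a ∈ I, ∀ b ∈ A, a * b ∈ I
  norm_closed : ∀ a ∈ A, (∀ ε : ℝ, 0 < ε → ∃ b ∈ I, ∀ t, ‖a t - b t‖ < ε) → a ∈ I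

/-- `I` is an essential ideal of `A`: it has nonzero intersection with every
nonzero ideal of `A`. -/
def IsEssentialIdealOf (A I : Set (∀ t, H t →L[ℂ] H t)) : Prop :=
  IsIdealOf A I ∧
    ∀ J, IsIdealOf A J → (∃ b ∈ J, b ≠ 0) → ∃ c, c ∈ I ∧ c ∈ J ∧ c ≠ 0

/-- The open set `X^I ⊆ T` associated with an ideal `I`
(the complement of `Z^I = {t | b t = 0 ∀ b ∈ I}`). -/
def idealSupp (I : Set (∀ t, H t →L[ℂ] H t)) : Set T :=
  {t | ∃ b ∈ I, b t ≠ 0}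

/-- `Ω_b`: the bounded vector fields of the bundle. -/
def boundedFields (Ω : Set (∀ t, H t)) : Set (∀ t, H t) :=
  {ω | ω ∈ Ω ∧ ∃ M : ℝ, ∀ t, ‖ω t‖ ≤ M}

/-- The rank-one operator field `Θ_{ω,ν} : ξ ↦ ⟨ξ, ν⟩·ω` (inner product linear
in `ξ`, conjugate-linear in `ν`). -/
def rankOneField (ω ν : ∀ t, H t) : ∀ t, H t →L[ℂ] H t :=
  fun t => (innerSL ℂ (ν t)).smulRight (ω t)

/-- `F(S)`: finite sums of rank-one fields `Θ_{ω,ν}` with `ω, ν ∈ S`. -/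
def finRankFields (S : Set (∀ t, H t)) : Set (∀ t, H t →L[ℂ] H t) :=
  {a | ∃ (n : ℕ) (ω ν : Fin n → ∀ t, H t), (∀ i, ω i ∈ S) ∧ (∀ i, ν i ∈ S) ∧
    a = fun t => ∑ i, rankOneField (ω i) (ν i) t}

/-- An operator field `x` is strictly continuous with respect to a family `F`
of operator fields. -/
def StrictlyCts (F : Set (∀ t, H t →L[ℂ] H t)) (x : ∀ t, H t →L[ℂ] H t) : Prop :=
  ∀ (t₀ : T), ∀ a ∈ F, ∀ ε : ℝ, 0 < ε → ∃ U : Set T, IsOpen U ∧ t₀ ∈ U ∧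
    ∃ b ∈ F, ∀ t ∈ U, ‖(x t - b t) * a t‖ + ‖a t * (x t - b t)‖ < ε

/-- The concrete realisation (Akemann–Pedersen–Tomiyama) of the multiplier
algebra: bounded operator fields, strictly continuous w.r.t. `F`. -/
def MultSet (F : Set (∀ t, H t →L[ℂ] H t)) : Set (∀ t, H t →L[ℂ] H t) :=
  {x | (∃ C : ℝ, ∀ t, ‖x t‖ ≤ C) ∧ StrictlyCts F x}

/-- Conjugation of an operator by a unitary (linear isometric equivalence). -/
def conjCLM {E F : Type*} [NormedAddCommGroup E] [NormedAddCommGroup F]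
    [NormedSpace ℂ E] [NormedSpace ℂ F] (e : E ≃ₗᵢ[ℂ] F) (x : E →L[ℂ] E) :
    F →L[ℂ] F :=
  ((e.toContinuousLinearEquiv : E →L[ℂ] F).comp x).comp
    (e.symm.toContinuousLinearEquiv : F →L[ℂ] E)

end
noncomputable section

variable {T : Type} [TopologicalSpace T] {H : T → Type}
  [∀ t, NormedAddCommGroup (H t)] [∀ t, InnerProductSpace ℂ (H t)]
  [∀ t, CompleteSpace (H t)]

/-- The index set `I_ess(A)` of essential ideals of the Fell algebra of `Ω`
(directed by reverse inclusion). -/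
@[reducible] def EssIdeal (Ω : Set (∀ t, H t)) : Type _ :=
  {I : Set (∀ t, H t →L[ℂ] H t) // IsEssentialIdealOf (FellAlgebra Ω) I}

/-- `Ω^I`: the local uniform limits of the induced fields `E^I = bar '' Ω_b`. -/
def OmegaExt {βX : Type} {HI : βX → Type} [TopologicalSpace βX]
    [∀ u, NormedAddCommGroup (HI u)]
    (Ω : Set (∀ t, H t)) (bar : (∀ t, H t) → ∀ u, HI u) : Set (∀ u, HI u) :=
  {ν | LocUnifApprox (bar '' boundedFields Ω) ν}

end
noncomputable section

variable {T : Type} [TopologicalSpace T] {H : T → Type}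
  [∀ t, NormedAddCommGroup (H t)] [∀ t, InnerProductSpace ℂ (H t)]
  [∀ t, CompleteSpace (H t)]

/-- The concrete realisation of the multiplier algebra `M(I)` of an essential
ideal `I` (Akemann–Pedersen–Tomiyama, Proposition `mult alg`): bounded operator
fields on `X^I` (with fibres `H_t`, via the identifications `e`), strictly
continuous with respect to `F((Ω^I|_{X^I})₀)`. -/
def MultOfIdeal {βX : Type} [TopologicalSpace βX] {HI : βX → Type}
    [∀ u, NormedAddCommGroup (HI u)] [∀ u, InnerProductSpace ℂ (HI u)]
    [∀ u, CompleteSpace (HI u)]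
    (Ω : Set (∀ t, H t)) (X : Set T) (ι : X → βX)
    (bar : (∀ t, H t) → ∀ u, HI u)
    (e : ∀ x : X, H x.1 ≃ₗᵢ[ℂ] HI (ι x)) :
    Set (∀ x : X, H x.1 →L[ℂ] H x.1) :=
  MultSet (finRankFields
    {ω' : ∀ x : X, H x.1 | ∃ μ ∈ OmegaExt Ω bar,
      (∀ x : X, ω' x = (e x).symm (μ (ι x))) ∧
      Filter.Tendsto (fun x : X => ‖ω' x‖) (Filter.cocompact X) (nhds 0)})

end
noncomputable section AuxConj

open ContinuousLinearMap in
theorem conjCLM_apply {E F : Type*} [NormedAddCommGroup E] [NormedAddCommGroup F]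
    [NormedSpace ℂ E] [NormedSpace ℂ F] (e : E ≃ₗᵢ[ℂ] F) (x : E →L[ℂ] E) (ξ : F) :
    conjCLM e x ξ = e (x (e.symm ξ)) := rfl

theorem conjCLM_add {E F : Type*} [NormedAddCommGroup E] [NormedAddCommGroup F]
    [NormedSpace ℂ E] [NormedSpace ℂ F] (e : E ≃ₗᵢ[ℂ] F) (x y : E →L[ℂ] E) :
    conjCLM e (x + y) = conjCLM e x + conjCLM e y := by
  ext ξ; simp [conjCLM_apply]

theorem conjCLM_smul {E F : Type*} [NormedAddCommGroup E] [NormedAddCommGroup F]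
    [NormedSpace ℂ E] [NormedSpace ℂ F] (e : E ≃ₗᵢ[ℂ] F) (c : ℂ) (x : E →L[ℂ] E) :
    conjCLM e (c • x) = c • conjCLM e x := by
  ext ξ; simp [conjCLM_apply]

theorem conjCLM_zero {E F : Type*} [NormedAddCommGroup E] [NormedAddCommGroup F]
    [NormedSpace ℂ E] [NormedSpace ℂ F] (e : E ≃ₗᵢ[ℂ] F) :
    conjCLM e 0 = 0 := by
  ext ξ; simp [conjCLM_apply]

theorem conjCLM_sub {E F : Type*} [NormedAddCommGroup E] [NormedAddCommGroup F]
    [NormedSpace ℂ E] [NormedSpace ℂ F] (e : E ≃ₗᵢ[ℂ] F) (x y : E →L[ℂ] E) :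
    conjCLM e (x - y) = conjCLM e x - conjCLM e y := by
  ext ξ; simp [conjCLM_apply]

theorem conjCLM_sum {E F : Type*} [NormedAddCommGroup E] [NormedAddCommGroup F]
    [NormedSpace ℂ E] [NormedSpace ℂ F] (e : E ≃ₗᵢ[ℂ] F) {ι : Type*} (s : Finset ι)
    (f : ι → E →L[ℂ] E) :
    conjCLM e (∑ i ∈ s, f i) = ∑ i ∈ s, conjCLM e (f i) :=
  map_sum (AddMonoidHom.mk' (conjCLM e) (conjCLM_add e)) f s

theorem conjCLM_mul {E F : Type*} [NormedAddCommGroup E] [NormedAddCommGroup F]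
    [NormedSpace ℂ E] [NormedSpace ℂ F] (e : E ≃ₗᵢ[ℂ] F) (x y : E →L[ℂ] E) :
    conjCLM e (x * y) = conjCLM e x * conjCLM e y := by
  ext ξ; simp [conjCLM_apply, ContinuousLinearMap.mul_apply]

theorem conjCLM_conjCLM {E F : Type*} [NormedAddCommGroup E] [NormedAddCommGroup F]
    [NormedSpace ℂ E] [NormedSpace ℂ F] (e : E ≃ₗᵢ[ℂ] F) (x : E →L[ℂ] E) :
    conjCLM e.symm (conjCLM e x) = x := by
  ext ξ; simp [conjCLM_apply]

theorem conjCLM_injective {E F : Type*} [NormedAddCommGroup E] [NormedAddCommGroup F]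
    [NormedSpace ℂ E] [NormedSpace ℂ F] (e : E ≃ₗᵢ[ℂ] F) {x y : E →L[ℂ] E}
    (h : conjCLM e x = conjCLM e y) : x = y := by
  have := congrArg (conjCLM e.symm) h
  rwa [conjCLM_conjCLM, conjCLM_conjCLM] at this

theorem conjCLM_star {E F : Type*} [NormedAddCommGroup E] [NormedAddCommGroup F]
    [InnerProductSpace ℂ E] [InnerProductSpace ℂ F] [CompleteSpace E] [CompleteSpace F]
    (e : E ≃ₗᵢ[ℂ] F) (x : E →L[ℂ] E) :
    conjCLM e (star x) = star (conjCLM e x) := by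
  rw [ContinuousLinearMap.star_eq_adjoint, ContinuousLinearMap.star_eq_adjoint,
    ContinuousLinearMap.eq_adjoint_iff]
  intro ξ η
  simp only [conjCLM_apply]
  calc (inner ℂ (e ((ContinuousLinearMap.adjoint x) (e.symm ξ))) η : ℂ)
      = inner ℂ (e ((ContinuousLinearMap.adjoint x) (e.symm ξ))) (e (e.symm η)) := by simp
    _ = inner ℂ ((ContinuousLinearMap.adjoint x) (e.symm ξ)) (e.symm η) := e.inner_map_map _ _
    _ = inner ℂ (e.symm ξ) (x (e.symm η)) := ContinuousLinearMap.adjoint_inner_left _ _ _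
    _ = inner ℂ (e (e.symm ξ)) (e (x (e.symm η))) := (e.inner_map_map _ _).symm
    _ = inner ℂ ξ (e (x (e.symm η))) := by simp

theorem conjCLM_norm_le {E F : Type*} [NormedAddCommGroup E] [NormedAddCommGroup F]
    [NormedSpace ℂ E] [NormedSpace ℂ F] (e : E ≃ₗᵢ[ℂ] F) (x : E →L[ℂ] E) :
    ‖conjCLM e x‖ ≤ ‖x‖ := by
  refine ContinuousLinearMap.opNorm_le_bound _ (norm_nonneg x) fun ξ => ?_
  rw [conjCLM_apply, e.norm_map]
  calc ‖x (e.symm ξ)‖ ≤ ‖x‖ * ‖e.symm ξ‖ := x.le_opNorm _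
    _ = ‖x‖ * ‖ξ‖ := by rw [e.symm.norm_map]

theorem conjCLM_norm {E F : Type*} [NormedAddCommGroup E] [NormedAddCommGroup F]
    [NormedSpace ℂ E] [NormedSpace ℂ F] (e : E ≃ₗᵢ[ℂ] F) (x : E →L[ℂ] E) :
    ‖conjCLM e x‖ = ‖x‖ := by
  refine le_antisymm (conjCLM_norm_le e x) ?_
  have := conjCLM_norm_le e.symm (conjCLM e x)
  rwa [conjCLM_conjCLM] at this

theorem conjCLM_rankOne {E F : Type*} [NormedAddCommGroup E] [NormedAddCommGroup F]
    [InnerProductSpace ℂ E] [InnerProductSpace ℂ F] (e : E ≃ₗᵢ[ℂ] F) (v w : E) :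
    conjCLM e ((innerSL ℂ v).smulRight w) = (innerSL ℂ (e v)).smulRight (e w) := by
  ext ξ
  simp only [conjCLM_apply, ContinuousLinearMap.smulRight_apply, innerSL_apply_apply, map_smul]
  congr 1
  rw [← e.inner_map_map]
  simp

end AuxConj
noncomputable section AuxHilbert

open Matrix in
theorem gram_isUnit {E : Type*} [NormedAddCommGroup E] [InnerProductSpace ℂ E]
    {n : ℕ} {v : Fin n → E} (hv : LinearIndependent ℂ v) :
    IsUnit (Matrix.of fun i j => (inner ℂ (v i) (v j) : ℂ)) := by
  set G : Matrix (Fin n) (Fin n) ℂ := Matrix.of fun i j => (inner ℂ (v i) (v j) : ℂ) with hG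
  rw [← Matrix.mulVec_injective_iff_isUnit]
  have key : ∀ d : Fin n → ℂ, G.mulVec d = 0 → d = 0 := by
    intro d hd
    have h0 : (∑ i, d i • v i) = 0 := by
      have h1 : (inner ℂ (∑ i, d i • v i) (∑ j, d j • v j) : ℂ) = 0 := by
        rw [sum_inner]
        have : ∀ i, (inner ℂ (d i • v i) (∑ j, d j • v j) : ℂ) = 0 := by
          intro i
          rw [inner_smul_left, inner_sum]
          have h2 : (∑ j, (inner ℂ (v i) (d j • v j) : ℂ)) = G.mulVec d i := by
            simp only [inner_smul_right, Matrix.mulVec, dotProduct, hG, Matrix.of_apply]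
            exact Finset.sum_congr rfl fun j _ => mul_comm _ _
          rw [h2, hd]
          simp
        simp [this]
      exact inner_self_eq_zero.mp h1
    funext i
    exact (Fintype.linearIndependent_iff.mp hv) d h0 i
  intro c c' h
  have : G.mulVec (c - c') = 0 := by rw [Matrix.mulVec_sub, h, sub_self]
  have := key _ this
  exact sub_eq_zero.mp this

theorem proj_repr {E : Type*} [NormedAddCommGroup E] [InnerProductSpace ℂ E] [CompleteSpace E]
    {n : ℕ} {v : Fin n → E} (hv : LinearIndependent ℂ v)
    {p : E →L[ℂ] E} (hp : IsIdempotentElem p) (hsa : IsSelfAdjoint p)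
    (hr : LinearMap.range (p : E →ₗ[ℂ] E) = Submodule.span ℂ (Set.range v)) (ξ : E) :
    p ξ = ∑ i, ((Matrix.of fun i j => (inner ℂ (v i) (v j) : ℂ))⁻¹.mulVec
      (fun k => (inner ℂ (v k) ξ : ℂ))) i • v i := by
  set G : Matrix (Fin n) (Fin n) ℂ := Matrix.of fun i j => (inner ℂ (v i) (v j) : ℂ) with hG
  have hrange : ∀ x, x ∈ LinearMap.range (p : E →ₗ[ℂ] E) → p x = x := by
    intro x hx
    obtain ⟨y, rfl⟩ := hx
    have := congrArg (fun q : E →L[ℂ] E => q y) hp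
    exact this
  have hpv : ∀ k, p (v k) = v k := by
    intro k
    apply hrange
    rw [hr]
    exact Submodule.subset_span (Set.mem_range_self k)
  have hpself : ∀ x y : E, (inner ℂ (p x) y : ℂ) = inner ℂ x (p y) := by
    intro x y
    conv_lhs => rw [← hsa.adjoint_eq]
    exact ContinuousLinearMap.adjoint_inner_left _ _ _
  obtain ⟨c, hc⟩ : ∃ c : Fin n → ℂ, ∑ i, c i • v i = p ξ := by
    rw [← Submodule.mem_span_range_iff_exists_fun ℂ, ← hr]
    exact LinearMap.mem_range_self (p : E →ₗ[ℂ] E) ξ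
  have hkey : (fun k => (inner ℂ (v k) ξ : ℂ)) = G.mulVec c := by
    funext k
    have : (inner ℂ (v k) ξ : ℂ) = inner ℂ (v k) (p ξ) := by
      rw [← hpv k, hpself, hpv]
    rw [this, ← hc, inner_sum]
    simp only [inner_smul_right, Matrix.mulVec, dotProduct, hG, Matrix.of_apply]
    exact Finset.sum_congr rfl fun j _ => mul_comm _ _
  rw [hkey, Matrix.mulVec_mulVec, Matrix.nonsing_inv_mul _
    ((Matrix.isUnit_iff_isUnit_det G).mp (gram_isUnit hv)), Matrix.one_mulVec, hc]

theorem pap_repr {E : Type*} [NormedAddCommGroup E] [InnerProductSpace ℂ E] [CompleteSpace E]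
    {n : ℕ} {v : Fin n → E} (hv : LinearIndependent ℂ v)
    {p : E →L[ℂ] E} (hp : IsIdempotentElem p) (hsa : IsSelfAdjoint p)
    (hr : LinearMap.range (p : E →ₗ[ℂ] E) = Submodule.span ℂ (Set.range v)) (a : E →L[ℂ] E) :
    p * a * p = ∑ i, ∑ k,
      (((Matrix.of fun i j => (inner ℂ (v i) (v j) : ℂ))⁻¹ *
        (Matrix.of fun l j => (inner ℂ (v l) (a (v j)) : ℂ)) *
        (Matrix.of fun i j => (inner ℂ (v i) (v j) : ℂ))⁻¹) i k) •
      (innerSL ℂ (v k)).smulRight (v i) := by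
  set G : Matrix (Fin n) (Fin n) ℂ := Matrix.of fun i j => (inner ℂ (v i) (v j) : ℂ) with hG
  set M : Matrix (Fin n) (Fin n) ℂ := Matrix.of fun l j => (inner ℂ (v l) (a (v j)) : ℂ) with hM
  set B : Matrix (Fin n) (Fin n) ℂ := G⁻¹ with hB
  ext ξ
  have happ : (p * a * p) ξ = p (a (p ξ)) := rfl
  rw [happ]
  have h1 : p ξ = ∑ j, (B.mulVec (fun k => (inner ℂ (v k) ξ : ℂ))) j • v j :=
    proj_repr hv hp hsa hr ξ
  have h2 : a (p ξ) = ∑ j, (B.mulVec (fun k => (inner ℂ (v k) ξ : ℂ))) j • a (v j) := by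
    rw [h1, map_sum]; simp only [map_smul]
  have h3 : ∀ j, p (a (v j)) = ∑ i, (B * M) i j • v i := by
    intro j
    rw [proj_repr hv hp hsa hr (a (v j))]
    refine Finset.sum_congr rfl fun i _ => ?_
    congr 1
  rw [h2, map_sum]
  simp only [map_smul, h3, Finset.smul_sum]
  -- LHS: ∑ j, ∑ i, coef j • ((B*M) i j • v i)
  rw [Finset.sum_comm]
  simp only [ContinuousLinearMap.sum_apply, ContinuousLinearMap.smul_apply,
    ContinuousLinearMap.smulRight_apply, innerSL_apply_apply]
  refine Finset.sum_congr rfl fun i _ => ?_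
  simp only [smul_smul]
  rw [← Finset.sum_smul, ← Finset.sum_smul]
  congr 1
  simp only [Matrix.mulVec, Matrix.mul_apply, dotProduct, Finset.sum_mul]
  rw [Finset.sum_comm]
  refine Finset.sum_congr rfl fun x _ => Finset.sum_congr rfl fun j _ => ?_
  rw [Finset.mul_sum]
  refine Finset.sum_congr rfl fun l _ => ?_
  ring

end AuxHilbert
noncomputable section AuxLocUnif

variable {Y : Type*} [TopologicalSpace Y] {HY : Y → Type*}
  [∀ u, NormedAddCommGroup (HY u)] [∀ u, InnerProductSpace ℂ (HY u)]

theorem mem_locUnifApprox_self {S : Set (∀ u, HY u)} {ω : ∀ u, HY u} (h : ω ∈ S) :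
    LocUnifApprox S ω := by
  intro u₀ ε hε
  exact ⟨Set.univ, isOpen_univ, Set.mem_univ _, ω, h, fun t _ => by simpa using hε⟩

theorem locUnif_inner_continuous {S : Set (∀ u, HY u)}
    (hS : ∀ μ ∈ S, ∀ ν ∈ S, Continuous fun u => (inner ℂ (μ u) (ν u) : ℂ))
    (hSnorm : ∀ μ ∈ S, Continuous fun u => ‖μ u‖)
    {ω ν : ∀ u, HY u} (hω : LocUnifApprox S ω) (hν : LocUnifApprox S ν) :
    Continuous fun u => (inner ℂ (ω u) (ν u) : ℂ) := by
  rw [continuous_iff_continuousAt]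
  intro u₀
  rw [ContinuousAt, Metric.tendsto_nhds]
  intro ε hε
  -- stage 1 : local bounds on ‖ω‖ and ‖ν‖
  obtain ⟨V₁, hV₁o, hV₁m, μa, hμaS, hμa⟩ := hω u₀ 1 one_pos
  obtain ⟨V₂, hV₂o, hV₂m, μb, hμbS, hμb⟩ := hν u₀ 1 one_pos
  set C₁ : ℝ := ‖μa u₀‖ + 2 with hC₁
  set C₂ : ℝ := ‖μb u₀‖ + 2 with hC₂
  have hC₁0 : (0:ℝ) < C₁ := by positivity
  have hC₂0 : (0:ℝ) < C₂ := by positivity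
  set W₁ : Set Y := V₁ ∩ {u | ‖μa u‖ < ‖μa u₀‖ + 1} with hW₁
  set W₂ : Set Y := V₂ ∩ {u | ‖μb u‖ < ‖μb u₀‖ + 1} with hW₂
  have hW₁o : IsOpen W₁ := hV₁o.inter (isOpen_lt (hSnorm _ hμaS) continuous_const)
  have hW₂o : IsOpen W₂ := hV₂o.inter (isOpen_lt (hSnorm _ hμbS) continuous_const)
  have hW₁m : u₀ ∈ W₁ := ⟨hV₁m, by simp⟩
  have hW₂m : u₀ ∈ W₂ := ⟨hV₂m, by simp⟩
  have hωbd : ∀ u ∈ W₁, ‖ω u‖ ≤ C₁ := by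
    intro u hu
    have h1 := hμa u hu.1
    have h2 : ‖μa u‖ < ‖μa u₀‖ + 1 := hu.2
    calc ‖ω u‖ = ‖μa u - (μa u - ω u)‖ := by rw [sub_sub_cancel]
      _ ≤ ‖μa u‖ + ‖μa u - ω u‖ := norm_sub_le _ _
      _ ≤ C₁ := by rw [hC₁]; linarith
  have hνbd : ∀ u ∈ W₂, ‖ν u‖ ≤ C₂ := by
    intro u hu
    have h1 := hμb u hu.1
    have h2 : ‖μb u‖ < ‖μb u₀‖ + 1 := hu.2
    calc ‖ν u‖ = ‖μb u - (μb u - ν u)‖ := by rw [sub_sub_cancel]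
      _ ≤ ‖μb u‖ + ‖μb u - ν u‖ := norm_sub_le _ _
      _ ≤ C₂ := by rw [hC₂]; linarith
  -- stage 2
  set δ : ℝ := min 1 (ε / (3 * (C₁ + C₂ + 1))) with hδdef
  have hδ0 : 0 < δ := lt_min one_pos (by positivity)
  have hδ1 : δ ≤ 1 := min_le_left _ _
  have hδε : δ * (C₁ + C₂ + 1) ≤ ε / 3 := by
    have h1 : δ ≤ ε / (3 * (C₁ + C₂ + 1)) := min_le_right _ _
    have h2 : (0:ℝ) < C₁ + C₂ + 1 := by positivity
    calc δ * (C₁ + C₂ + 1) ≤ (ε / (3 * (C₁ + C₂ + 1))) * (C₁ + C₂ + 1) := by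
          apply mul_le_mul_of_nonneg_right h1 (le_of_lt h2)
      _ = ε / 3 := by field_simp
  obtain ⟨U₁, hU₁o, hU₁m, μ₁, hμ₁S, hμ₁⟩ := hω u₀ δ hδ0
  obtain ⟨U₂, hU₂o, hU₂m, μ₂, hμ₂S, hμ₂⟩ := hν u₀ δ hδ0
  have hg : Continuous fun u => (inner ℂ (μ₁ u) (μ₂ u) : ℂ) := hS _ hμ₁S _ hμ₂S
  -- the key pointwise estimate
  have hest : ∀ u, u ∈ U₁ ∩ U₂ ∩ (W₁ ∩ W₂) →
      ‖(inner ℂ (ω u) (ν u) : ℂ) - (inner ℂ (μ₁ u) (μ₂ u) : ℂ)‖ ≤ ε / 3 := by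
    rintro u ⟨⟨hu1, hu2⟩, hw1, hw2⟩
    have e1 : (inner ℂ (ω u) (ν u) : ℂ) - inner ℂ (μ₁ u) (μ₂ u) =
        (inner ℂ (ω u - μ₁ u) (ν u) : ℂ) + inner ℂ (μ₁ u) (ν u - μ₂ u) := by
      rw [inner_sub_left, inner_sub_right]; ring
    rw [e1]
    have b1 : ‖(inner ℂ (ω u - μ₁ u) (ν u) : ℂ)‖ ≤ δ * C₂ := by
      calc ‖(inner ℂ (ω u - μ₁ u) (ν u) : ℂ)‖ ≤ ‖ω u - μ₁ u‖ * ‖ν u‖ := norm_inner_le_norm _ _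
        _ ≤ δ * C₂ := by
            apply mul_le_mul _ (hνbd u hw2) (norm_nonneg _) (le_of_lt hδ0)
            rw [norm_sub_rev]; exact le_of_lt (hμ₁ u hu1)
    have b2 : ‖(inner ℂ (μ₁ u) (ν u - μ₂ u) : ℂ)‖ ≤ (C₁ + 1) * δ := by
      calc ‖(inner ℂ (μ₁ u) (ν u - μ₂ u) : ℂ)‖ ≤ ‖μ₁ u‖ * ‖ν u - μ₂ u‖ := norm_inner_le_norm _ _
        _ ≤ (C₁ + 1) * δ := by
            apply mul_le_mul _ _ (norm_nonneg _) (by positivity)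
            · have hh := norm_add_le (μ₁ u - ω u) (ω u)
              rw [sub_add_cancel] at hh
              have := hμ₁ u hu1
              have := hωbd u hw1
              linarith
            · rw [norm_sub_rev]; exact le_of_lt (hμ₂ u hu2)
    calc ‖(inner ℂ (ω u - μ₁ u) (ν u) : ℂ) + inner ℂ (μ₁ u) (ν u - μ₂ u)‖
        ≤ ‖(inner ℂ (ω u - μ₁ u) (ν u) : ℂ)‖ + ‖(inner ℂ (μ₁ u) (ν u - μ₂ u) : ℂ)‖ := norm_add_le _ _
      _ ≤ δ * C₂ + (C₁ + 1) * δ := add_le_add b1 b2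
      _ = δ * (C₁ + C₂ + 1) := by ring
      _ ≤ ε / 3 := hδε
  have hUopen : IsOpen (U₁ ∩ U₂ ∩ (W₁ ∩ W₂)) :=
    ((hU₁o.inter hU₂o).inter (hW₁o.inter hW₂o))
  have hUmem : u₀ ∈ U₁ ∩ U₂ ∩ (W₁ ∩ W₂) := ⟨⟨hU₁m, hU₂m⟩, hW₁m, hW₂m⟩
  have hgev : ∀ᶠ u in nhds u₀, dist ((inner ℂ (μ₁ u) (μ₂ u) : ℂ))
      ((inner ℂ (μ₁ u₀) (μ₂ u₀) : ℂ)) < ε / 3 := by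
    have := hg.continuousAt (x := u₀)
    rw [ContinuousAt, Metric.tendsto_nhds] at this
    exact this (ε / 3) (by positivity)
  filter_upwards [hUopen.mem_nhds hUmem, hgev] with u hu hgu
  have h1 := hest u hu
  have h2 := hest u₀ hUmem
  rw [dist_eq_norm] at hgu ⊢
  calc ‖(inner ℂ (ω u) (ν u) : ℂ) - (inner ℂ (ω u₀) (ν u₀) : ℂ)‖
      ≤ ‖(inner ℂ (ω u) (ν u) : ℂ) - (inner ℂ (μ₁ u) (μ₂ u) : ℂ)‖ +
        ‖(inner ℂ (μ₁ u) (μ₂ u) : ℂ) - (inner ℂ (μ₁ u₀) (μ₂ u₀) : ℂ)‖ +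
        ‖(inner ℂ (μ₁ u₀) (μ₂ u₀) : ℂ) - (inner ℂ (ω u₀) (ν u₀) : ℂ)‖ := by
        have := norm_add₃_le (a := (inner ℂ (ω u) (ν u) : ℂ) - (inner ℂ (μ₁ u) (μ₂ u) : ℂ))
          (b := (inner ℂ (μ₁ u) (μ₂ u) : ℂ) - (inner ℂ (μ₁ u₀) (μ₂ u₀) : ℂ))
          (c := (inner ℂ (μ₁ u₀) (μ₂ u₀) : ℂ) - (inner ℂ (ω u₀) (ν u₀) : ℂ))
        simpa using this
    _ < ε / 3 + ε / 3 + ε / 3 := by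
        have h2' : ‖(inner ℂ (μ₁ u₀) (μ₂ u₀) : ℂ) - (inner ℂ (ω u₀) (ν u₀) : ℂ)‖ ≤ ε / 3 := by
          rw [norm_sub_rev]; exact h2
        exact add_lt_add_of_lt_of_le (add_lt_add_of_le_of_lt h1 hgu) h2'
    _ = ε := by ring

theorem locUnif_norm_continuous {S : Set (∀ u, HY u)}
    (hS : ∀ μ ∈ S, ∀ ν ∈ S, Continuous fun u => (inner ℂ (μ u) (ν u) : ℂ))
    (hSnorm : ∀ μ ∈ S, Continuous fun u => ‖μ u‖)
    {ω : ∀ u, HY u} (hω : LocUnifApprox S ω) :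
    Continuous fun u => ‖ω u‖ := by
  have h := locUnif_inner_continuous hS hSnorm hω hω
  have : (fun u => ‖ω u‖) = fun u => Real.sqrt (Complex.re (inner ℂ (ω u) (ω u) : ℂ)) := by
    funext u
    exact norm_eq_sqrt_re_inner (𝕜 := ℂ) (ω u)
  rw [this]
  exact Real.continuous_sqrt.comp (Complex.continuous_re.comp h)

end AuxLocUnif
noncomputable section AuxMore

variable {Y : Type*} [TopologicalSpace Y] {HY : Y → Type*}
  [∀ u, NormedAddCommGroup (HY u)] [∀ u, InnerProductSpace ℂ (HY u)]

theorem locUnifApprox_smul_fun {S : Set (∀ u, HY u)}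
    (hSsmul : ∀ (c : ℂ), ∀ μ ∈ S, (fun u => c • μ u) ∈ S)
    (hSnorm : ∀ μ ∈ S, Continuous fun u => ‖μ u‖)
    {ω : ∀ u, HY u} (hω : LocUnifApprox S ω) {h : Y → ℂ} (hh : Continuous h) :
    LocUnifApprox S (fun u => h u • ω u) := by
  intro u₀ ε hε
  set δ : ℝ := ε / (2 * (‖h u₀‖ + 1)) with hδdef
  have hδ0 : 0 < δ := by positivity
  obtain ⟨U₁, hU₁o, hU₁m, μ, hμS, hμ⟩ := hω u₀ δ hδ0
  set δ' : ℝ := min 1 (ε / (2 * (‖μ u₀‖ + 2))) with hδ'def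
  have hδ'0 : 0 < δ' := lt_min one_pos (by positivity)
  have hδ'1 : δ' ≤ 1 := min_le_left _ _
  set U : Set Y := U₁ ∩ {u | ‖h u - h u₀‖ < δ'} ∩ {u | ‖μ u‖ < ‖μ u₀‖ + 1} with hU
  have hUo : IsOpen U := by
    refine (hU₁o.inter (isOpen_lt ?_ continuous_const)).inter
      (isOpen_lt (hSnorm _ hμS) continuous_const)
    exact (hh.sub continuous_const).norm
  have hUm : u₀ ∈ U := ⟨⟨hU₁m, by simp [hδ'0]⟩, by simp⟩
  refine ⟨U, hUo, hUm, (fun u => h u₀ • μ u), hSsmul _ _ hμS, ?_⟩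
  rintro u ⟨⟨hu1, hu2⟩, hu3⟩
  have est : ‖h u₀ • μ u - h u • ω u‖ ≤ ‖h u₀ - h u‖ * ‖μ u‖ + ‖h u‖ * ‖μ u - ω u‖ := by
    calc ‖h u₀ • μ u - h u • ω u‖
        = ‖(h u₀ - h u) • μ u + h u • (μ u - ω u)‖ := by
          congr 1
          rw [sub_smul, smul_sub]
          abel
      _ ≤ ‖(h u₀ - h u) • μ u‖ + ‖h u • (μ u - ω u)‖ := norm_add_le _ _
      _ = ‖h u₀ - h u‖ * ‖μ u‖ + ‖h u‖ * ‖μ u - ω u‖ := by rw [norm_smul, norm_smul]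
  have b1 : ‖h u₀ - h u‖ * ‖μ u‖ < ε / 2 := by
    have h1 : ‖h u₀ - h u‖ < δ' := by rw [norm_sub_rev]; exact hu2
    have h2 : ‖μ u‖ < ‖μ u₀‖ + 1 := hu3
    have h3 : δ' ≤ ε / (2 * (‖μ u₀‖ + 2)) := min_le_right _ _
    have h4 : ‖h u₀ - h u‖ * ‖μ u‖ ≤ δ' * (‖μ u₀‖ + 1) := by
      apply mul_le_mul (le_of_lt h1) (le_of_lt h2) (norm_nonneg _) (le_of_lt hδ'0)
    have h5 : δ' * (‖μ u₀‖ + 1) < δ' * (‖μ u₀‖ + 2) := by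
      apply mul_lt_mul_of_pos_left (by linarith) hδ'0
    have h6 : δ' * (‖μ u₀‖ + 2) ≤ (ε / (2 * (‖μ u₀‖ + 2))) * (‖μ u₀‖ + 2) := by
      apply mul_le_mul_of_nonneg_right h3 (by positivity)
    have h7 : (ε / (2 * (‖μ u₀‖ + 2))) * (‖μ u₀‖ + 2) = ε / 2 := by
      field_simp
    linarith
  have b2 : ‖h u‖ * ‖μ u - ω u‖ ≤ ε / 2 := by
    have h1 : ‖h u‖ ≤ ‖h u₀‖ + 1 := by
      have := norm_add_le (h u - h u₀) (h u₀)
      rw [sub_add_cancel] at this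
      have hu2' : ‖h u - h u₀‖ < δ' := hu2
      linarith
    have h2 : ‖μ u - ω u‖ ≤ δ := le_of_lt (hμ u hu1)
    calc ‖h u‖ * ‖μ u - ω u‖ ≤ (‖h u₀‖ + 1) * δ := by
          apply mul_le_mul h1 h2 (norm_nonneg _) (by positivity)
      _ = ε / 2 := by rw [hδdef]; field_simp
  calc ‖h u₀ • μ u - h u • ω u‖ ≤ ‖h u₀ - h u‖ * ‖μ u‖ + ‖h u‖ * ‖μ u - ω u‖ := est
    _ < ε / 2 + ε / 2 := add_lt_add_of_lt_of_le b1 b2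
    _ = ε := by ring

theorem smulRight_smul_vec {E : Type*} [NormedAddCommGroup E] [InnerProductSpace ℂ E]
    (f : E →L[ℂ] ℂ) (c : ℂ) (x : E) :
    f.smulRight (c • x) = c • f.smulRight x := by
  ext ξ
  simp only [ContinuousLinearMap.smulRight_apply, ContinuousLinearMap.smul_apply]
  rw [smul_comm]

end AuxMore

noncomputable section AuxFinRank

variable {T : Type*} [TopologicalSpace T] {H : T → Type*}
  [∀ t, NormedAddCommGroup (H t)] [∀ t, InnerProductSpace ℂ (H t)]
  [∀ t, CompleteSpace (H t)]

theorem finRankFields_zero (S : Set (∀ t, H t)) :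
    (fun t => (0 : H t →L[ℂ] H t)) ∈ finRankFields S := by
  refine ⟨0, Fin.elim0, Fin.elim0, fun i => i.elim0, fun i => i.elim0, ?_⟩
  funext t
  simp

theorem finRankFields_add {S : Set (∀ t, H t)} {a b : ∀ t, H t →L[ℂ] H t}
    (ha : a ∈ finRankFields S) (hb : b ∈ finRankFields S) :
    (fun t => a t + b t) ∈ finRankFields S := by
  obtain ⟨n, ω, ν, hω, hν, rfl⟩ := ha
  obtain ⟨m, ω', ν', hω', hν', rfl⟩ := hb
  refine ⟨n + m, Fin.append ω ω', Fin.append ν ν', ?_, ?_, ?_⟩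
  · intro i
    refine Fin.addCases (fun j => ?_) (fun j => ?_) i
    · rw [Fin.append_left]; exact hω j
    · rw [Fin.append_right]; exact hω' j
  · intro i
    refine Fin.addCases (fun j => ?_) (fun j => ?_) i
    · rw [Fin.append_left]; exact hν j
    · rw [Fin.append_right]; exact hν' j
  · funext t
    rw [Fin.sum_univ_add]
    congr 1
    · refine Finset.sum_congr rfl fun i _ => ?_
      rw [Fin.append_left, Fin.append_left]
    · refine Finset.sum_congr rfl fun i _ => ?_
      rw [Fin.append_right, Fin.append_right]

theorem finRankFields_sum {S : Set (∀ t, H t)} {ι : Type*} [DecidableEq ι] (s : Finset ι)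
    (f g : ι → ∀ t, H t) (hf : ∀ i ∈ s, f i ∈ S) (hg : ∀ i ∈ s, g i ∈ S) :
    (fun t => ∑ i ∈ s, rankOneField (f i) (g i) t) ∈ finRankFields S := by
  induction s using Finset.induction_on with
  | empty => simpa using finRankFields_zero S
  | insert i s' hx ih =>
    have h1 : (fun t => ∑ j ∈ insert i s', rankOneField (f j) (g j) t) =
        fun t => rankOneField (f i) (g i) t + ∑ j ∈ s', rankOneField (f j) (g j) t := by
      funext t
      rw [Finset.sum_insert hx]
    rw [h1]
    have hone : (fun t => rankOneField (f i) (g i) t) ∈ finRankFields S := by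
      refine ⟨1, fun _ => f i, fun _ => g i, fun _ => hf i (Finset.mem_insert_self i s'),
        fun _ => hg i (Finset.mem_insert_self i s'), ?_⟩
      funext t
      simp
    exact finRankFields_add hone (ih (fun j hj => hf j (Finset.mem_insert_of_mem hj))
      (fun j hj => hg j (Finset.mem_insert_of_mem hj)))

end AuxFinRank
noncomputable section AuxMain

theorem fell_finrank_approx {Y : Type} [TopologicalSpace Y] [CompactSpace Y] [T2Space Y]
    {HY : Y → Type} [∀ u, NormedAddCommGroup (HY u)] [∀ u, InnerProductSpace ℂ (HY u)]
    [∀ u, CompleteSpace (HY u)]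
    (S : Set (∀ u, HY u))
    (hS_inner : ∀ μ ∈ S, ∀ ν ∈ S, Continuous fun u => (inner ℂ (μ u) (ν u) : ℂ))
    (hS_norm : ∀ μ ∈ S, Continuous fun u => ‖μ u‖)
    (hS_smul : ∀ (c : ℂ), ∀ μ ∈ S, (fun u => c • μ u) ∈ S)
    (a' : ∀ u, HY u →L[ℂ] HY u)
    (hwc : WeaklyCts {ν | LocUnifApprox S ν} a')
    (hafd : AlmostFinDim {ν | LocUnifApprox S ν} a')
    (ε : ℝ) (hε : 0 < ε) :
    ∃ (J : Type) (_ : Fintype J) (f g : J → ∀ u, HY u),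
      (∀ x, LocUnifApprox S (f x)) ∧ (∀ x, LocUnifApprox S (g x)) ∧
      (∀ x, Continuous fun u => ‖f x u‖) ∧ (∀ x, Continuous fun u => ‖g x u‖) ∧
      ∀ u, ‖a' u - ∑ x : J, rankOneField (f x) (g x) u‖ < ε := by
  classical
  -- local almost-finite-dimensional data
  have hloc : ∀ u₀ : Y, ∃ U : Set Y, IsOpen U ∧ u₀ ∈ U ∧
      ∃ (n : ℕ) (v : Fin n → ∀ u, HY u), (∀ i, v i ∈ {ν | LocUnifApprox S ν}) ∧
        ∀ u ∈ U, LinearIndependent ℂ (fun i => v i u) ∧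
          ∃ p : HY u →L[ℂ] HY u, IsIdempotentElem p ∧ IsSelfAdjoint p ∧
            LinearMap.range (p : HY u →ₗ[ℂ] HY u) = Submodule.span ℂ (Set.range fun i => v i u) ∧
            ‖p * a' u * p - a' u‖ < ε / 2 :=
    fun u₀ => hafd u₀ (ε / 2) (by positivity)
  choose U hUo hUm n v hv hU using hloc
  -- finite subcover
  have hcov : (Set.univ : Set Y) ⊆ ⋃ u₀, U u₀ := fun u _ => Set.mem_iUnion.2 ⟨u, hUm u⟩
  obtain ⟨F, hF⟩ := isCompact_univ.elim_finite_subcover U hUo hcov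
  have hcov' : (Set.univ : Set Y) ⊆ ⋃ j : {j : Y // j ∈ F}, U j.1 := by
    intro u hu
    have := hF hu
    rw [Set.mem_iUnion₂] at this
    obtain ⟨i, hiF, hui⟩ := this
    exact Set.mem_iUnion.2 ⟨⟨i, hiF⟩, hui⟩
  -- partition of unity
  obtain ⟨φ, hφ⟩ := PartitionOfUnity.exists_isSubordinate (s := (Set.univ : Set Y))
    isClosed_univ (fun j : {j : Y // j ∈ F} => U j.1) (fun j => hUo j.1) hcov'
  have hφsum : ∀ u, ∑ j : {j : Y // j ∈ F}, φ j u = 1 := fun u => by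
    rw [← finsum_eq_sum_of_fintype]
    exact φ.sum_eq_one (Set.mem_univ u)
  have hφ0 : ∀ (j) (u), 0 ≤ φ j u := fun j u => φ.nonneg j u
  have hφsupp : ∀ (j) (u), φ j u ≠ 0 → u ∈ U j.1 := fun j u h =>
    hφ j (subset_closure (by exact h))
  -- the local matrix-valued coefficient fields
  set Gm : ∀ (j : {j : Y // j ∈ F}) (u : Y), Matrix (Fin (n j.1)) (Fin (n j.1)) ℂ :=
    fun j u => Matrix.of fun i k => (inner ℂ (v j.1 i u) (v j.1 k u) : ℂ) with hGm
  set Mm : ∀ (j : {j : Y // j ∈ F}) (u : Y), Matrix (Fin (n j.1)) (Fin (n j.1)) ℂ :=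
    fun j u => Matrix.of fun l k => (inner ℂ (v j.1 l u) (a' u (v j.1 k u)) : ℂ) with hMm
  set dm : ∀ (j : {j : Y // j ∈ F}) (u : Y), Matrix (Fin (n j.1)) (Fin (n j.1)) ℂ :=
    fun j u => (Gm j u)⁻¹ * Mm j u * (Gm j u)⁻¹ with hdm
  set cf : ∀ (j : {j : Y // j ∈ F}), Fin (n j.1) → Fin (n j.1) → Y → ℂ :=
    fun j i k u => ((φ j u : ℝ) : ℂ) * dm j u i k with hcf
  -- continuity of the matrix entries
  have hGcont : ∀ j, Continuous fun u => Gm j u := by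
    intro j
    apply continuous_matrix
    intro i k
    exact locUnif_inner_continuous hS_inner hS_norm (hv j.1 i) (hv j.1 k)
  have hMcont : ∀ j l k, Continuous fun u => Mm j u l k := by
    intro j l k
    have h1 : Continuous fun u => (inner ℂ (a' u (v j.1 k u)) (v j.1 l u) : ℂ) :=
      hwc _ (hv j.1 k) _ (hv j.1 l)
    have h2 : (fun u => Mm j u l k) =
        fun u => star (inner ℂ (a' u (v j.1 k u)) (v j.1 l u) : ℂ) := by
      funext u
      exact (inner_conj_symm _ _).symm
    rw [h2]
    exact h1.star
  have hGunit : ∀ j, ∀ u ∈ U j.1, IsUnit (Gm j u) := fun j u hu =>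
    gram_isUnit (hU j.1 u hu).1
  have hdetne : ∀ j, ∀ u ∈ U j.1, (Gm j u).det ≠ 0 := fun j u hu =>
    ((Matrix.isUnit_iff_isUnit_det _).1 (hGunit j u hu)).ne_zero
  have hBentry : ∀ (j) (i k : Fin (n j.1)),
      ContinuousOn (fun u => (Gm j u)⁻¹ i k) (U j.1) := by
    intro j i k
    have heq : ∀ u, (Gm j u)⁻¹ i k = ((Gm j u).det)⁻¹ * (Gm j u).adjugate i k := by
      intro u
      rw [Matrix.inv_def, Matrix.smul_apply, Ring.inverse_eq_inv']
      rfl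
    simp only [heq]
    exact (((hGcont j).matrix_det.continuousOn).inv₀ (fun u hu => hdetne j u hu)).mul
      ((hGcont j).matrix_adjugate.matrix_elem i k).continuousOn
  have hdcont : ∀ (j) (i k : Fin (n j.1)),
      ContinuousOn (fun u => dm j u i k) (U j.1) := by
    intro j i k
    have heq : ∀ u, dm j u i k =
        ∑ y, (∑ x, (Gm j u)⁻¹ i x * Mm j u x y) * (Gm j u)⁻¹ y k := by
      intro u
      simp [hdm, Matrix.mul_apply]
    simp only [heq]
    apply continuousOn_finset_sum
    intro y _
    refine ContinuousOn.mul (continuousOn_finset_sum _ fun x _ => ?_) (hBentry j y k)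
    exact (hBentry j i x).mul (hMcont j x y).continuousOn
  have hccont : ∀ (j) (i k : Fin (n j.1)), Continuous (cf j i k) := by
    intro j i k
    rw [continuous_iff_continuousAt]
    intro u
    by_cases hu : u ∈ U j.1
    · refine ContinuousAt.mul ?_ ((hdcont j i k).continuousAt ((hUo j.1).mem_nhds hu))
      exact (Complex.continuous_ofReal.comp (φ j).continuous).continuousAt
    · have hout : ∀ᶠ w in nhds u, cf j i k w = 0 := by
        have hno : u ∉ tsupport (φ j) := fun hmem => hu (hφ j hmem)
        have : ∀ᶠ w in nhds u, w ∉ tsupport (φ j) :=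
          (isClosed_tsupport (φ j)).isOpen_compl.eventually_mem hno
        filter_upwards [this] with w hw
        have : φ j w = 0 := image_eq_zero_of_notMem_tsupport hw
        simp [hcf, this]
      have : cf j i k =ᶠ[nhds u] fun _ => (0 : ℂ) := hout
      rw [continuousAt_congr this]
      exact continuousAt_const
  -- local approximation estimate
  have hplocal : ∀ (j) (u), u ∈ U j.1 →
      ‖a' u - ∑ i, ∑ k, dm j u i k • (innerSL ℂ (v j.1 k u)).smulRight (v j.1 i u)‖
        ≤ ε / 2 := by
    intro j u hu
    obtain ⟨hli, p, hp, hsa, hr, hlt⟩ := hU j.1 u hu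
    have hpap := pap_repr hli hp hsa hr (a' u)
    have : (∑ i, ∑ k, dm j u i k • (innerSL ℂ (v j.1 k u)).smulRight (v j.1 i u)) =
        p * a' u * p := by
      rw [hpap]
    rw [this, norm_sub_rev]
    exact le_of_lt hlt
  -- assemble the global approximant
  refine ⟨Σ j : {j : Y // j ∈ F}, Fin (n j.1) × Fin (n j.1), inferInstance,
    (fun x => fun u => cf x.1 x.2.1 x.2.2 u • v x.1.1 x.2.1 u),
    (fun x => v x.1.1 x.2.2), ?_, ?_, ?_, ?_, ?_⟩
  · intro x
    exact locUnifApprox_smul_fun hS_smul hS_norm (hv x.1.1 x.2.1) (hccont x.1 x.2.1 x.2.2)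
  · intro x
    exact hv x.1.1 x.2.2
  · intro x
    have h1 : (fun u => ‖cf x.1 x.2.1 x.2.2 u • v x.1.1 x.2.1 u‖) =
        fun u => ‖cf x.1 x.2.1 x.2.2 u‖ * ‖v x.1.1 x.2.1 u‖ := by
      funext u
      exact norm_smul _ _
    rw [h1]
    exact (hccont x.1 x.2.1 x.2.2).norm.mul
      (locUnif_norm_continuous hS_inner hS_norm (hv x.1.1 x.2.1))
  · intro x
    exact locUnif_norm_continuous hS_inner hS_norm (hv x.1.1 x.2.2)
  · intro u
    -- rewrite the sigma sum as iterated sums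
    have hsig : (∑ x : Σ j : {j : Y // j ∈ F}, Fin (n j.1) × Fin (n j.1),
        rankOneField (fun w => cf x.1 x.2.1 x.2.2 w • v x.1.1 x.2.1 w) (v x.1.1 x.2.2) u) =
        ∑ j : {j : Y // j ∈ F}, ((φ j u : ℝ) : ℂ) •
          ∑ i, ∑ k, dm j u i k • (innerSL ℂ (v j.1 k u)).smulRight (v j.1 i u) := by
      rw [Finset.univ_sigma_univ.symm, Finset.sum_sigma]
      refine Finset.sum_congr rfl fun j _ => ?_
      rw [Finset.smul_sum]
      rw [← Finset.univ_product_univ, Finset.sum_product]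
      refine Finset.sum_congr rfl fun i _ => ?_
      rw [Finset.smul_sum]
      refine Finset.sum_congr rfl fun k _ => ?_
      show (innerSL ℂ (v j.1 k u)).smulRight (cf j i k u • v j.1 i u) = _
      rw [smulRight_smul_vec, hcf]
      simp only [mul_smul]
    rw [hsig]
    have hone : a' u = ∑ j : {j : Y // j ∈ F}, ((φ j u : ℝ) : ℂ) • a' u := by
      rw [← Finset.sum_smul]
      have : (∑ j : {j : Y // j ∈ F}, ((φ j u : ℝ) : ℂ)) = 1 := by
        rw [← Complex.ofReal_sum, hφsum u, Complex.ofReal_one]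
      rw [this, one_smul]
    calc ‖a' u - ∑ j : {j : Y // j ∈ F}, ((φ j u : ℝ) : ℂ) •
          ∑ i, ∑ k, dm j u i k • (innerSL ℂ (v j.1 k u)).smulRight (v j.1 i u)‖
        = ‖∑ j : {j : Y // j ∈ F}, ((φ j u : ℝ) : ℂ) •
            (a' u - ∑ i, ∑ k, dm j u i k • (innerSL ℂ (v j.1 k u)).smulRight (v j.1 i u))‖ := by
          rw [show (∑ j : {j : Y // j ∈ F}, ((φ j u : ℝ) : ℂ) •
            (a' u - ∑ i, ∑ k, dm j u i k • (innerSL ℂ (v j.1 k u)).smulRight (v j.1 i u))) =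
            (∑ j : {j : Y // j ∈ F}, ((φ j u : ℝ) : ℂ) • a' u) -
            ∑ j : {j : Y // j ∈ F}, ((φ j u : ℝ) : ℂ) •
              ∑ i, ∑ k, dm j u i k • (innerSL ℂ (v j.1 k u)).smulRight (v j.1 i u) by
            rw [← Finset.sum_sub_distrib]
            exact Finset.sum_congr rfl fun j _ => smul_sub _ _ _]
          rw [← hone]
      _ ≤ ∑ j : {j : Y // j ∈ F}, ‖((φ j u : ℝ) : ℂ) •
            (a' u - ∑ i, ∑ k, dm j u i k • (innerSL ℂ (v j.1 k u)).smulRight (v j.1 i u))‖ :=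
          norm_sum_le _ _
      _ ≤ ∑ j : {j : Y // j ∈ F}, φ j u * (ε / 2) := by
          refine Finset.sum_le_sum fun j _ => ?_
          rw [norm_smul]
          have hc : ‖((φ j u : ℝ) : ℂ)‖ = φ j u := by
            rw [Complex.norm_real, Real.norm_of_nonneg (hφ0 j u)]
          rw [hc]
          by_cases hz : φ j u = 0
          · rw [hz, zero_mul, zero_mul]
          · exact mul_le_mul_of_nonneg_left (hplocal j u (hφsupp j u hz)) (hφ0 j u)
      _ = ε / 2 := by
          rw [← Finset.sum_mul, hφsum u, one_mul]
      _ < ε := by linarith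

end AuxMain
set_option maxHeartbeats 1000000

/-- Theorem `a-komega-mloc inclusion`.  There exists a
*-monomorphism `β = π_A ∘ δ_A : A → K(Ω^Δ)` such that `γ ∘ β : A → M_loc(A)` is
the canonical embedding of `A` into its local multiplier algebra (the
composition of `A → M(A)`, `a ↦ a|_{X^A}`, with the canonical map
`π̃_A : M(A) → M_loc(A)`). -/
theorem beta_gives_canonical_embedding
    {T : Type} [TopologicalSpace T] [LocallyCompactSpace T] [T2Space T]
    {H : T → Type} [∀ t, NormedAddCommGroup (H t)] [∀ t, InnerProductSpace ℂ (H t)]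
    [∀ t, CompleteSpace (H t)]
    (Ω : Set (∀ t, H t)) (hΩ : IsCtsHilbertBundle Ω)
    -- Stone–Čech data over every essential ideal:
    {βX : EssIdeal Ω → Type} [∀ I, TopologicalSpace (βX I)]
    [∀ I, CompactSpace (βX I)] [∀ I, T2Space (βX I)]
    (ι : ∀ I : EssIdeal Ω, idealSupp I.1 → βX I)
    (hι : ∀ I, Topology.IsEmbedding (ι I)) (hιd : ∀ I, DenseRange (ι I))
    {HI : ∀ I : EssIdeal Ω, βX I → Type}
    [∀ I u, NormedAddCommGroup (HI I u)] [∀ I u, InnerProductSpace ℂ (HI I u)]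
    [∀ I u, CompleteSpace (HI I u)]
    (bar : ∀ I : EssIdeal Ω, (∀ t, H t) → ∀ u, HI I u)
    (hbar_add : ∀ I, ∀ ω ∈ boundedFields Ω, ∀ ν ∈ boundedFields Ω,
      bar I (ω + ν) = bar I ω + bar I ν)
    (hbar_smul : ∀ I, ∀ (c : ℂ), ∀ ω ∈ boundedFields Ω, bar I (c • ω) = c • bar I ω)
    (hbar_inner_cont : ∀ I, ∀ ω ∈ boundedFields Ω, ∀ ν ∈ boundedFields Ω,
      Continuous fun u => (inner ℂ (bar I ω u) (bar I ν u) : ℂ))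
    (hbar_inner_eq : ∀ I, ∀ ω ∈ boundedFields Ω, ∀ ν ∈ boundedFields Ω,
      ∀ x : idealSupp I.1, (inner ℂ (bar I ω (ι I x)) (bar I ν (ι I x)) : ℂ) =
        (inner ℂ (ω x.1) (ν x.1) : ℂ))
    (hbar_dense : ∀ I (u : βX I) (v : HI I u) (ε : ℝ), 0 < ε →
      ∃ ω ∈ boundedFields Ω, ‖bar I ω u - v‖ < ε)
    -- the connecting maps `Φ_{JI} : βX^I → βX^J` (for `I ⊆ J`):
    (hXmono : ∀ I J : EssIdeal Ω, I.1 ⊆ J.1 →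
      (idealSupp I.1 : Set T) ⊆ idealSupp J.1)
    (Φmap : ∀ I J : EssIdeal Ω, I.1 ⊆ J.1 → βX I → βX J)
    (hΦmap_cont : ∀ I J h, Continuous (Φmap I J h))
    (hΦmap_ι : ∀ I J (h : I.1 ⊆ J.1) (x : idealSupp I.1),
      Φmap I J h (ι I x) = ι J (Set.inclusion (hXmono I J h) x))
    -- the inverse limit `Δ = lim← βX^I` with canonical surjections `Φ_I`:
    {Δ : Type} [TopologicalSpace Δ] [CompactSpace Δ] [T2Space Δ]
    (Φ : ∀ I : EssIdeal Ω, Δ → βX I)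
    (hΦcont : ∀ I, Continuous (Φ I)) (hΦsurj : ∀ I, Function.Surjective (Φ I))
    (hΦcompat : ∀ I J (h : I.1 ⊆ J.1) (s : Δ), Φmap I J h (Φ I s) = Φ J s)
    (hΦsep : ∀ s s' : Δ, (∀ I, Φ I s = Φ I s') → s = s')
    (hΦlim : ∀ x : ∀ I : EssIdeal Ω, βX I,
      (∀ I J (h : I.1 ⊆ J.1), Φmap I J h (x I) = x J) → ∃ s : Δ, ∀ I, Φ I s = x I)
    (hbasis : ∀ W : Set Δ, IsOpen W → ∀ s ∈ W, ∃ (I : EssIdeal Ω) (V : Set (βX I)),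
      IsOpen V ∧ s ∈ Φ I ⁻¹' V ∧ Φ I ⁻¹' V ⊆ W)
    -- the limit fibres `H_s^Δ` with canonical unitaries `Ψ_{I,s}`:
    {HΔ : Δ → Type} [∀ s, NormedAddCommGroup (HΔ s)]
    [∀ s, InnerProductSpace ℂ (HΔ s)] [∀ s, CompleteSpace (HΔ s)]
    (Ψ : ∀ (I : EssIdeal Ω) (s : Δ), HI I (Φ I s) ≃ₗᵢ[ℂ] HΔ s)
    (hΨcompat : ∀ I J (h : I.1 ⊆ J.1) (s : Δ), ∀ ω ∈ boundedFields Ω,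
      Ψ I s (bar I ω (Φ I s)) = Ψ J s (bar J ω (Φ J s)))
    (hΨdense : ∀ (s : Δ) (v : HΔ s) (ε : ℝ), 0 < ε →
      ∃ (I : EssIdeal Ω) (ν : ∀ u, HI I u), ν ∈ OmegaExt Ω (bar I) ∧
        ‖Ψ I s (ν (Φ I s)) - v‖ < ε)
    -- the identifications `H^I_{ι_I x} = H_x` for `x ∈ X^I`:
    (e : ∀ (I : EssIdeal Ω) (x : idealSupp I.1), H x.1 ≃ₗᵢ[ℂ] HI I (ι I x))
    (hbar_e : ∀ (I : EssIdeal Ω), ∀ ω ∈ boundedFields Ω, ∀ x : idealSupp I.1,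
      (e I x).symm (bar I ω (ι I x)) = ω x.1)
    -- `M_loc(A) = lim→ M(I)`: a C*-algebra `ML` with canonical isometric
    -- *-homomorphisms `π̃_I : M(I) → ML`, compatible with the connecting
    -- restriction maps `M(J) → M(I)` and with dense union of images:
    {ML : Type} [NormedRing ML] [StarRing ML] [CStarRing ML]
    [NormedAlgebra ℂ ML] [CompleteSpace ML] [StarModule ℂ ML]
    (πt : ∀ I : EssIdeal Ω, (∀ x : idealSupp I.1, H x.1 →L[ℂ] H x.1) → ML)
    (hπt_add : ∀ (I : EssIdeal Ω), ∀ x ∈ MultOfIdeal Ω (idealSupp I.1) (ι I) (bar I) (e I),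
      ∀ y ∈ MultOfIdeal Ω (idealSupp I.1) (ι I) (bar I) (e I),
      πt I (x + y) = πt I x + πt I y)
    (hπt_smul : ∀ (I : EssIdeal Ω), ∀ (c : ℂ), ∀ x ∈ MultOfIdeal Ω (idealSupp I.1) (ι I) (bar I) (e I),
      πt I (c • x) = c • πt I x)
    (hπt_mul : ∀ (I : EssIdeal Ω), ∀ x ∈ MultOfIdeal Ω (idealSupp I.1) (ι I) (bar I) (e I),
      ∀ y ∈ MultOfIdeal Ω (idealSupp I.1) (ι I) (bar I) (e I),
      πt I (x * y) = πt I x * πt I y)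
    (hπt_star : ∀ (I : EssIdeal Ω), ∀ x ∈ MultOfIdeal Ω (idealSupp I.1) (ι I) (bar I) (e I),
      πt I (star x) = star (πt I x))
    (hπt_isom : ∀ (I : EssIdeal Ω), ∀ x ∈ MultOfIdeal Ω (idealSupp I.1) (ι I) (bar I) (e I),
      ‖πt I x‖ = ⨆ t : idealSupp I.1, ‖x t‖)
    (hπt_compat : ∀ (I J : EssIdeal Ω) (h : I.1 ⊆ J.1),
      ∀ x ∈ MultOfIdeal Ω (idealSupp J.1) (ι J) (bar J) (e J),
      πt J x = πt I fun t => x ⟨t.1, hXmono I J h t.2⟩)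
    (hπt_dense : ∀ (z : ML) (ε : ℝ), 0 < ε → ∃ (I : EssIdeal Ω),
      ∃ x ∈ MultOfIdeal Ω (idealSupp I.1) (ι I) (bar I) (e I), ‖z - πt I x‖ < ε)
    -- `A` is an essential ideal of itself; `A^A`, `δ_A : A → A^A`:
    (hAess : IsEssentialIdealOf (FellAlgebra Ω) (FellAlgebra Ω))
    (δA : (∀ t, H t →L[ℂ] H t) → ∀ u, HI ⟨FellAlgebra Ω, hAess⟩ u →L[ℂ]
      HI ⟨FellAlgebra Ω, hAess⟩ u)
    (hδA_mem : ∀ a ∈ FellAlgebra Ω, δA a ∈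
      FellAlgebra (OmegaExt Ω (bar ⟨FellAlgebra Ω, hAess⟩)))
    (hδA_val : ∀ a ∈ FellAlgebra Ω, ∀ x : idealSupp (FellAlgebra Ω),
      δA a (ι ⟨FellAlgebra Ω, hAess⟩ x) =
        conjCLM (e ⟨FellAlgebra Ω, hAess⟩ x) (a x.1))
    (hδA_zero : ∀ a ∈ FellAlgebra Ω, ∀ u, u ∉ Set.range (ι ⟨FellAlgebra Ω, hAess⟩) →
      δA a u = 0)
    -- `γ : K(Ω^Δ) → M_loc(A)`, the monomorphism of Theorem `k-omega`,
    -- compatible with the canonical embeddings `γ_I : A^I → M(I)`: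
    (γ : (∀ s, HΔ s →L[ℂ] HΔ s) → ML)
    (hγ_inj : ∀ a ∈ {b : ∀ s, HΔ s →L[ℂ] HΔ s | ∀ ε : ℝ, 0 < ε →
        ∃ k ∈ finRankFields
          {ξ : ∀ s, HΔ s | (∃ M : ℝ, ∀ s, ‖ξ s‖ ≤ M) ∧
            LocUnifApprox
              {μ : ∀ s, HΔ s | ∃ (I : EssIdeal Ω) (ν : ∀ u, HI I u),
                ν ∈ OmegaExt Ω (bar I) ∧ μ = fun s => Ψ I s (ν (Φ I s))} ξ},
          ∀ s, ‖a s - k s‖ < ε},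
      ∀ b ∈ {b : ∀ s, HΔ s →L[ℂ] HΔ s | ∀ ε : ℝ, 0 < ε →
        ∃ k ∈ finRankFields
          {ξ : ∀ s, HΔ s | (∃ M : ℝ, ∀ s, ‖ξ s‖ ≤ M) ∧
            LocUnifApprox
              {μ : ∀ s, HΔ s | ∃ (I : EssIdeal Ω) (ν : ∀ u, HI I u),
                ν ∈ OmegaExt Ω (bar I) ∧ μ = fun s => Ψ I s (ν (Φ I s))} ξ},
          ∀ s, ‖a s - k s‖ < ε},
      γ a = γ b → a = b)
    (hγ_compat : ∀ (I : EssIdeal Ω), ∀ a ∈ FellAlgebra (OmegaExt Ω (bar I)),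
      γ (fun s => conjCLM (Ψ I s) (a (Φ I s))) =
        πt I fun x => conjCLM (e I x).symm (a (ι I x))) :
    -- conclusion: `β = π_A ∘ δ_A : A → K(Ω^Δ)` is a *-monomorphism and
    -- `γ ∘ β` is the canonical embedding `A → M_loc(A)`:
    let ΩΔ : Set (∀ s, HΔ s) :=
      {ξ | (∃ M : ℝ, ∀ s, ‖ξ s‖ ≤ M) ∧
        LocUnifApprox
          {μ : ∀ s, HΔ s | ∃ (I : EssIdeal Ω) (ν : ∀ u, HI I u),
            ν ∈ OmegaExt Ω (bar I) ∧ μ = fun s => Ψ I s (ν (Φ I s))} ξ}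
    let KΩ : Set (∀ s, HΔ s →L[ℂ] HΔ s) :=
      {b | ∀ ε : ℝ, 0 < ε → ∃ k ∈ finRankFields ΩΔ, ∀ s, ‖b s - k s‖ < ε}
    let β : (∀ t, H t →L[ℂ] H t) → ∀ s, HΔ s →L[ℂ] HΔ s := fun a s =>
      conjCLM (Ψ ⟨FellAlgebra Ω, hAess⟩ s) (δA a (Φ ⟨FellAlgebra Ω, hAess⟩ s))
    (∀ a ∈ FellAlgebra Ω, β a ∈ KΩ) ∧
    (∀ a ∈ FellAlgebra Ω, ∀ b ∈ FellAlgebra Ω, β (a + b) = β a + β b) ∧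
    (∀ (c : ℂ), ∀ a ∈ FellAlgebra Ω, β (c • a) = c • β a) ∧
    (∀ a ∈ FellAlgebra Ω, ∀ b ∈ FellAlgebra Ω, β (a * b) = β a * β b) ∧
    (∀ a ∈ FellAlgebra Ω, β (star a) = star (β a)) ∧
    (∀ a ∈ FellAlgebra Ω, ∀ b ∈ FellAlgebra Ω, β a = β b → a = b) ∧
    (∀ a ∈ FellAlgebra Ω,
      γ (β a) = πt ⟨FellAlgebra Ω, hAess⟩ fun x : idealSupp (FellAlgebra Ω) => a x.1) := by

  classical
  intro ΩΔ KΩ β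
  -- pointwise descriptions of δA on sums, products, etc.
  have hδadd : ∀ a ∈ FellAlgebra Ω, ∀ b ∈ FellAlgebra Ω, ∀ u,
      δA (a + b) u = δA a u + δA b u := by
    intro a ha b hb u
    by_cases hu : u ∈ Set.range (ι ⟨FellAlgebra Ω, hAess⟩)
    · obtain ⟨x, rfl⟩ := hu
      rw [hδA_val _ (hAess.1.add_mem a ha b hb) x, hδA_val _ ha x, hδA_val _ hb x,
        ← conjCLM_add]
      rfl
    · rw [hδA_zero _ (hAess.1.add_mem a ha b hb) u hu, hδA_zero _ ha u hu,
        hδA_zero _ hb u hu, add_zero]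
  have hδsmul : ∀ (c : ℂ), ∀ a ∈ FellAlgebra Ω, ∀ u, δA (c • a) u = c • δA a u := by
    intro c a ha u
    by_cases hu : u ∈ Set.range (ι ⟨FellAlgebra Ω, hAess⟩)
    · obtain ⟨x, rfl⟩ := hu
      rw [hδA_val _ (hAess.1.smul_mem c a ha) x, hδA_val _ ha x, ← conjCLM_smul]
      rfl
    · rw [hδA_zero _ (hAess.1.smul_mem c a ha) u hu, hδA_zero _ ha u hu, smul_zero]
  have hδmul : ∀ a ∈ FellAlgebra Ω, ∀ b ∈ FellAlgebra Ω, ∀ u,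
      δA (a * b) u = δA a u * δA b u := by
    intro a ha b hb u
    by_cases hu : u ∈ Set.range (ι ⟨FellAlgebra Ω, hAess⟩)
    · obtain ⟨x, rfl⟩ := hu
      rw [hδA_val _ (hAess.1.mul_mem_right a ha b hb) x, hδA_val _ ha x, hδA_val _ hb x,
        ← conjCLM_mul]
      rfl
    · rw [hδA_zero _ (hAess.1.mul_mem_right a ha b hb) u hu, hδA_zero _ ha u hu,
        zero_mul]
  have hδstar : ∀ a ∈ FellAlgebra Ω, ∀ u, δA (star a) u = star (δA a u) := by
    intro a ha u
    by_cases hu : u ∈ Set.range (ι ⟨FellAlgebra Ω, hAess⟩)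
    · obtain ⟨x, rfl⟩ := hu
      rw [hδA_val _ (hAess.1.star_mem a ha) x, hδA_val _ ha x, ← conjCLM_star]
      rfl
    · rw [hδA_zero _ (hAess.1.star_mem a ha) u hu, hδA_zero _ ha u hu, star_zero]
  refine ⟨?_, ?_, ?_, ?_, ?_, ?_, ?_⟩
  · -- β a ∈ KΩ
    intro a ha
    intro ε hε
    obtain ⟨hwc, hafd, -⟩ := hδA_mem a ha
    have hS_inner : ∀ μ ∈ bar ⟨FellAlgebra Ω, hAess⟩ '' boundedFields Ω,
        ∀ ν ∈ bar ⟨FellAlgebra Ω, hAess⟩ '' boundedFields Ω,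
        Continuous fun u => (inner ℂ (μ u) (ν u) : ℂ) := by
      rintro _ ⟨ω₁, h₁, rfl⟩ _ ⟨ω₂, h₂, rfl⟩
      exact hbar_inner_cont _ ω₁ h₁ ω₂ h₂
    have hS_norm : ∀ μ ∈ bar ⟨FellAlgebra Ω, hAess⟩ '' boundedFields Ω,
        Continuous fun u => ‖μ u‖ := by
      rintro _ ⟨ω₁, h₁, rfl⟩
      have h := hbar_inner_cont ⟨FellAlgebra Ω, hAess⟩ ω₁ h₁ ω₁ h₁
      have heq : (fun u => ‖bar ⟨FellAlgebra Ω, hAess⟩ ω₁ u‖) = fun u =>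
          Real.sqrt (Complex.re (inner ℂ (bar ⟨FellAlgebra Ω, hAess⟩ ω₁ u)
            (bar ⟨FellAlgebra Ω, hAess⟩ ω₁ u) : ℂ)) :=
        funext fun u => norm_eq_sqrt_re_inner (𝕜 := ℂ) _
      rw [heq]
      exact Real.continuous_sqrt.comp (Complex.continuous_re.comp h)
    have hS_smul : ∀ (c : ℂ), ∀ μ ∈ bar ⟨FellAlgebra Ω, hAess⟩ '' boundedFields Ω,
        (fun u => c • μ u) ∈ bar ⟨FellAlgebra Ω, hAess⟩ '' boundedFields Ω := by
      rintro c _ ⟨ω₁, h₁, rfl⟩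
      refine ⟨fun t => c • ω₁ t, ⟨hΩ.smul_mem (ContinuousMap.const T c) ω₁ h₁.1, ?_⟩, ?_⟩
      · obtain ⟨Mb, hMb⟩ := h₁.2
        exact ⟨‖c‖ * Mb, fun t => by
          rw [norm_smul]
          exact mul_le_mul_of_nonneg_left (hMb t) (norm_nonneg c)⟩
      · exact hbar_smul ⟨FellAlgebra Ω, hAess⟩ c ω₁ h₁
    obtain ⟨J, hJfin, f, g, hf, hg, hfn, hgn, happ⟩ := fell_finrank_approx
      (bar ⟨FellAlgebra Ω, hAess⟩ '' boundedFields Ω) hS_inner hS_norm hS_smul (δA a)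
      hwc hafd ε hε
    letI := hJfin
    have hmemΩΔ : ∀ μ : (∀ u, HI ⟨FellAlgebra Ω, hAess⟩ u),
        LocUnifApprox (bar ⟨FellAlgebra Ω, hAess⟩ '' boundedFields Ω) μ →
        (Continuous fun u => ‖μ u‖) →
        (fun s => Ψ ⟨FellAlgebra Ω, hAess⟩ s (μ (Φ ⟨FellAlgebra Ω, hAess⟩ s))) ∈ ΩΔ := by
      intro μ hμ hμn
      refine ⟨?_, ?_⟩
      · have hc : Continuous fun s : Δ => ‖μ (Φ ⟨FellAlgebra Ω, hAess⟩ s)‖ :=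
          hμn.comp (hΦcont _)
        rcases isEmpty_or_nonempty Δ with hΔ | hΔ
        · exact ⟨0, fun s => (hΔ.false s).elim⟩
        · obtain ⟨s₀, -, hs₀⟩ := isCompact_univ.exists_isMaxOn Set.univ_nonempty
            hc.continuousOn
          refine ⟨‖μ (Φ ⟨FellAlgebra Ω, hAess⟩ s₀)‖, fun s => ?_⟩
          rw [LinearIsometryEquiv.norm_map]
          exact hs₀ (Set.mem_univ s)
      · exact mem_locUnifApprox_self ⟨⟨FellAlgebra Ω, hAess⟩, μ, hμ, rfl⟩
    refine ⟨fun s => ∑ x : J, rankOneField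
        (fun s' => Ψ ⟨FellAlgebra Ω, hAess⟩ s' (f x (Φ ⟨FellAlgebra Ω, hAess⟩ s')))
        (fun s' => Ψ ⟨FellAlgebra Ω, hAess⟩ s' (g x (Φ ⟨FellAlgebra Ω, hAess⟩ s'))) s,
      ?_, ?_⟩
    · exact finRankFields_sum (Finset.univ : Finset J) _ _
        (fun x _ => hmemΩΔ _ (hf x) (hfn x)) (fun x _ => hmemΩΔ _ (hg x) (hgn x))
    · intro s
      have h2 : (∑ x : J, rankOneField
          (fun s' => Ψ ⟨FellAlgebra Ω, hAess⟩ s' (f x (Φ ⟨FellAlgebra Ω, hAess⟩ s')))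
          (fun s' => Ψ ⟨FellAlgebra Ω, hAess⟩ s' (g x (Φ ⟨FellAlgebra Ω, hAess⟩ s'))) s) =
          conjCLM (Ψ ⟨FellAlgebra Ω, hAess⟩ s)
            (∑ x : J, rankOneField (f x) (g x) (Φ ⟨FellAlgebra Ω, hAess⟩ s)) := by
        rw [conjCLM_sum]
        refine Finset.sum_congr rfl fun x _ => ?_
        exact (conjCLM_rankOne _ _ _).symm
      show ‖conjCLM (Ψ ⟨FellAlgebra Ω, hAess⟩ s)
          (δA a (Φ ⟨FellAlgebra Ω, hAess⟩ s)) - (∑ x : J, rankOneField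
        (fun s' => Ψ ⟨FellAlgebra Ω, hAess⟩ s' (f x (Φ ⟨FellAlgebra Ω, hAess⟩ s')))
        (fun s' => Ψ ⟨FellAlgebra Ω, hAess⟩ s' (g x (Φ ⟨FellAlgebra Ω, hAess⟩ s'))) s)‖ < ε
      rw [h2, ← conjCLM_sub, conjCLM_norm]
      exact happ _
  · -- additive
    intro a ha b hb
    funext s
    show conjCLM (Ψ ⟨FellAlgebra Ω, hAess⟩ s) (δA (a + b) (Φ ⟨FellAlgebra Ω, hAess⟩ s)) = _
    rw [hδadd a ha b hb, conjCLM_add]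
    rfl
  · -- smul
    intro c a ha
    funext s
    show conjCLM (Ψ ⟨FellAlgebra Ω, hAess⟩ s) (δA (c • a) (Φ ⟨FellAlgebra Ω, hAess⟩ s)) = _
    rw [hδsmul c a ha, conjCLM_smul]
    rfl
  · -- mul
    intro a ha b hb
    funext s
    show conjCLM (Ψ ⟨FellAlgebra Ω, hAess⟩ s) (δA (a * b) (Φ ⟨FellAlgebra Ω, hAess⟩ s)) = _
    rw [hδmul a ha b hb, conjCLM_mul]
    rfl
  · -- star
    intro a ha
    funext s
    show conjCLM (Ψ ⟨FellAlgebra Ω, hAess⟩ s) (δA (star a) (Φ ⟨FellAlgebra Ω, hAess⟩ s)) = _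
    rw [hδstar a ha, conjCLM_star]
    rfl
  · -- injective
    intro a ha b hb hab
    funext t
    by_cases ht : t ∈ idealSupp (FellAlgebra Ω) (H := H)
    · set x : idealSupp (FellAlgebra Ω) (H := H) := ⟨t, ht⟩ with hx
      obtain ⟨s, hs⟩ := hΦsurj ⟨FellAlgebra Ω, hAess⟩ (ι ⟨FellAlgebra Ω, hAess⟩ x)
      have h1 : conjCLM (Ψ ⟨FellAlgebra Ω, hAess⟩ s) (δA a (Φ ⟨FellAlgebra Ω, hAess⟩ s)) = conjCLM (Ψ ⟨FellAlgebra Ω, hAess⟩ s) (δA b (Φ ⟨FellAlgebra Ω, hAess⟩ s)) :=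
        congrFun hab s
      have h2 : δA a (Φ ⟨FellAlgebra Ω, hAess⟩ s) = δA b (Φ ⟨FellAlgebra Ω, hAess⟩ s) := conjCLM_injective _ h1
      rw [hs] at h2
      rw [hδA_val a ha x, hδA_val b hb x] at h2
      exact conjCLM_injective _ h2
    · have h0 : ∀ c ∈ FellAlgebra Ω, c t = 0 := by
        intro c hc
        by_contra hct
        exact ht ⟨c, hc, hct⟩
      rw [h0 a ha, h0 b hb]
  · -- γ ∘ β is the canonical embedding
    intro a ha
    have h1 := hγ_compat ⟨FellAlgebra Ω, hAess⟩ (δA a) (hδA_mem a ha)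
    have h2 : β a = fun s => conjCLM (Ψ ⟨FellAlgebra Ω, hAess⟩ s) (δA a (Φ ⟨FellAlgebra Ω, hAess⟩ s)) := rfl
    rw [h2, h1]
    congr 1
    funext x
    rw [hδA_val a ha x, conjCLM_conjCLM]
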